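/- Let F⁺ : (0, 1) → [0, 1] be the orientation-preserving Farey map, F⁺(x) := x/(1−x) for 0 < x < 1/2 and F⁺(x) := 2 − 1/x for 1/2 ≤ x < 1. Then the σ-finite Borel measure on (0, 1) with density x ↦ 1/(x(1−x)) with respect to Lebesgue measure is F⁺-invariant: for every Borel set A ⊆ (0, 1), the measure of (F⁺)^{-1}(A) equals the measure of A. -/

import Mathlib

open MeasureTheory

/-- The orientation-preserving Farey map: `F⁺(x) = x/(1−x)` for `x < 1/2` and
`F⁺(x) = 2 − 1/x` for `x ≥ 1/2`. -/
noncomputable def fareyPlusMap (x : ℝ) : ℝ :=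
  if x < 1 / 2 then x / (1 - x) else 2 - 1 / x

/-- The σ-finite measure on `(0, 1)` with density `x ↦ 1/(x(1−x))` w.r.t. Lebesgue
measure. -/
noncomputable def fareyPlusMeasure : Measure ℝ :=
  (volume.restrict (Set.Ioo (0 : ℝ) 1)).withDensity
    (fun x => ENNReal.ofReal (1 / (x * (1 - x))))

/-- 1D change of variables for lower integrals. -/
theorem my_lintegral_image_eq {s : Set ℝ} {f : ℝ → ℝ} {f' : ℝ → ℝ}
    (hs : MeasurableSet s) (hf' : ∀ x ∈ s, HasDerivWithinAt f (f' x) s x)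
    (hf : Set.InjOn f s) (g : ℝ → ENNReal) :
    ∫⁻ x in f '' s, g x = ∫⁻ x in s, ENNReal.ofReal |f' x| * g (f x) := by
  simpa only [ContinuousLinearMap.det_toSpanSingleton] using
    lintegral_image_eq_lintegral_abs_det_fderiv_mul volume hs
      (fun x hx => (hf' x hx).hasFDerivWithinAt) hf g

/-- The σ-finite Borel measure on `(0, 1)` with density `1/(x(1−x))`
w.r.t. Lebesgue measure is invariant for the orientation-preserving Farey map `F⁺`: for
every Borel set `A ⊆ (0, 1)`, the measure of `(F⁺)⁻¹(A)` equals the measure of `A`. -/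
theorem stmt_17 :
    ∀ A : Set ℝ, MeasurableSet A → A ⊆ Set.Ioo (0 : ℝ) 1 →
      fareyPlusMeasure (fareyPlusMap ⁻¹' A) = fareyPlusMeasure A := by
  intro A hA hA1
  have hFmeas : Measurable fareyPlusMap := by
    unfold fareyPlusMap
    exact Measurable.ite (measurableSet_lt measurable_id measurable_const)
      (measurable_id.div (measurable_const.sub measurable_id))
      (measurable_const.sub (measurable_const.div measurable_id))
  have hmeasP : MeasurableSet (fareyPlusMap ⁻¹' A) := hFmeas hA
  have happly : ∀ S : Set ℝ, MeasurableSet S →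
      fareyPlusMeasure S
        = ∫⁻ x in S ∩ Set.Ioo (0:ℝ) 1, ENNReal.ofReal (1/(x*(1-x))) := by
    intro S hS
    rw [fareyPlusMeasure, withDensity_apply _ hS, Measure.restrict_restrict hS]
  -- branch inverses
  set g₀ : ℝ → ℝ := fun y => y / (1 + y) with hg₀def
  set g₁ : ℝ → ℝ := fun y => 1 / (2 - y) with hg₁def
  -- set identities
  have h0 : fareyPlusMap ⁻¹' A ∩ Set.Ioo (0:ℝ) (1/2) = g₀ '' A := by
    ext x
    simp only [Set.mem_inter_iff, Set.mem_preimage, Set.mem_Ioo, Set.mem_image]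
    constructor
    · rintro ⟨hxA, hx0, hx2⟩
      refine ⟨x / (1 - x), ?_, ?_⟩
      · rwa [fareyPlusMap, if_pos hx2] at hxA
      · have h1x : (1:ℝ) - x ≠ 0 := by intro h; nlinarith
        simp only [hg₀def]
        field_simp
        ring
    · rintro ⟨y, hy, rfl⟩
      obtain ⟨hy0, hy1⟩ := hA1 hy
      have h1y : (0:ℝ) < 1 + y := by linarith
      have hglt : g₀ y < 1/2 := by
        rw [hg₀def, div_lt_iff₀ h1y]; linarith
      refine ⟨?_, ?_, hglt⟩
      · rw [fareyPlusMap, if_pos hglt]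
        have : (1:ℝ) - g₀ y = 1 / (1 + y) := by
          rw [hg₀def]; field_simp; ring
        rw [this, hg₀def]
        field_simp
        exact hy
      · rw [hg₀def]; positivity
  have h1 : fareyPlusMap ⁻¹' A ∩ Set.Ioo (1/2 : ℝ) 1 = g₁ '' A := by
    ext x
    simp only [Set.mem_inter_iff, Set.mem_preimage, Set.mem_Ioo, Set.mem_image]
    constructor
    · rintro ⟨hxA, hx2, hx1⟩
      refine ⟨2 - 1/x, ?_, ?_⟩
      · rwa [fareyPlusMap, if_neg (not_lt.mpr hx2.le)] at hxA
      · have hx0 : x ≠ 0 := by positivity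
        simp only [hg₁def]
        field_simp
        ring
    · rintro ⟨y, hy, rfl⟩
      obtain ⟨hy0, hy1⟩ := hA1 hy
      have h2y : (0:ℝ) < 2 - y := by linarith
      have hg12 : (1:ℝ)/2 < g₁ y := by
        rw [hg₁def, div_lt_div_iff₀ (by norm_num) h2y]; linarith
      refine ⟨?_, hg12, ?_⟩
      · rw [fareyPlusMap, if_neg (not_lt.mpr hg12.le)]
        have : (1:ℝ) / g₁ y = 2 - y := by
          rw [hg₁def]; field_simp
        rw [this]
        simpa using hy
      · rw [hg₁def, div_lt_one h2y]; linarith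
  have hsplit : fareyPlusMap ⁻¹' A ∩ Set.Ioo (0:ℝ) 1
      = (fareyPlusMap ⁻¹' A ∩ Set.Ioo (0:ℝ) (1/2))
        ∪ (fareyPlusMap ⁻¹' A ∩ Set.Ioo (1/2 : ℝ) 1) := by
    ext x
    simp only [Set.mem_inter_iff, Set.mem_preimage, Set.mem_Ioo, Set.mem_union]
    constructor
    · rintro ⟨hxA, hx0, hx1⟩
      rcases lt_trichotomy x (1/2) with h | h | h
      · exact Or.inl ⟨hxA, hx0, h⟩
      · exfalso
        have : fareyPlusMap x = 0 := by
          rw [fareyPlusMap, h, if_neg (lt_irrefl _)]; norm_num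
        rw [this] at hxA
        exact lt_irrefl 0 (hA1 hxA).1
      · exact Or.inr ⟨hxA, h, hx1⟩
    · rintro (⟨hxA, hx0, hx2⟩ | ⟨hxA, hx2, hx1⟩)
      · exact ⟨hxA, hx0, by linarith⟩
      · exact ⟨hxA, by linarith, hx1⟩
  -- change of variables, branch 0
  have hcv0 : ∫⁻ x in g₀ '' A, ENNReal.ofReal (1/(x*(1-x)))
      = ∫⁻ y in A, ENNReal.ofReal (1/y) := by
    rw [my_lintegral_image_eq (f' := fun y => 1/(1+y)^2) hA ?_ ?_]
    · apply setLIntegral_congr_fun hA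
      intro y hy
      beta_reduce
      obtain ⟨hy0, hy1⟩ := hA1 hy
      have h1y : (0:ℝ) < 1 + y := by linarith
      rw [← ENNReal.ofReal_mul (abs_nonneg _)]
      congr 1
      rw [abs_of_pos (by positivity)]
      rw [hg₀def]
      have hy0' : y ≠ 0 := ne_of_gt hy0
      have h1y' : (1:ℝ) + y ≠ 0 := ne_of_gt h1y
      have h1 : y / (1 + y) * (1 - y / (1 + y)) = y / (1+y)^2 := by
        field_simp
        try ring
        try tauto
      rw [h1, one_div_div]
      field_simp
    · intro y hy
      obtain ⟨hy0, hy1⟩ := hA1 hy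
      have h1y : (1:ℝ) + y ≠ 0 := by positivity
      have hd : HasDerivAt (fun z : ℝ => z / (1 + z)) (1/(1+y)^2) y := by
        have := (hasDerivAt_id y).div ((hasDerivAt_const y 1).add (hasDerivAt_id y)) h1y
        simp only [id_eq] at this
        refine this.congr_deriv ?_
        simp only [Pi.add_apply, id_eq]
        field_simp
        ring
      exact hd.hasDerivWithinAt
    · intro a ha b hb hab
      obtain ⟨ha0, ha1⟩ := hA1 ha
      obtain ⟨hb0, hb1⟩ := hA1 hb
      have h1 : (1:ℝ) + a ≠ 0 := by positivity
      have h2 : (1:ℝ) + b ≠ 0 := by positivity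
      rw [hg₀def] at hab
      field_simp at hab
      linarith
  -- change of variables, branch 1
  have hcv1 : ∫⁻ x in g₁ '' A, ENNReal.ofReal (1/(x*(1-x)))
      = ∫⁻ y in A, ENNReal.ofReal (1/(1-y)) := by
    rw [my_lintegral_image_eq (f' := fun y => 1/(2-y)^2) hA ?_ ?_]
    · apply setLIntegral_congr_fun hA
      intro y hy
      beta_reduce
      obtain ⟨hy0, hy1⟩ := hA1 hy
      have h2y : (0:ℝ) < 2 - y := by linarith
      have h1y : (0:ℝ) < 1 - y := by linarith
      rw [← ENNReal.ofReal_mul (abs_nonneg _)]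
      congr 1
      rw [abs_of_pos (by positivity)]
      rw [hg₁def]
      have h2y' : (2:ℝ) - y ≠ 0 := ne_of_gt h2y
      have h1y' : (1:ℝ) - y ≠ 0 := ne_of_gt h1y
      have h1 : 1 / (2 - y) * (1 - 1 / (2 - y)) = (1-y) / (2-y)^2 := by
        field_simp
        try ring
        try tauto
      rw [h1, one_div_div]
      field_simp
    · intro y hy
      obtain ⟨hy0, hy1⟩ := hA1 hy
      have h2y : (2:ℝ) - y ≠ 0 := by intro h; linarith
      have hd : HasDerivAt (fun z : ℝ => 2 - z) (-1) y := by
        exact ((hasDerivAt_const y (2:ℝ)).sub (hasDerivAt_id' y)).congr_deriv (by ring)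
      have := hd.inv h2y
      have h2 : -(-1) / (2 - y)^2 = 1/(2-y)^2 := by ring
      rw [h2] at this
      have h3 : (fun z : ℝ => 2 - z)⁻¹ = g₁ := by
        funext z; rw [hg₁def]; simp [one_div]
      rw [h3] at this
      exact this.hasDerivWithinAt
    · intro a ha b hb hab
      obtain ⟨ha0, ha1⟩ := hA1 ha
      obtain ⟨hb0, hb1⟩ := hA1 hb
      have h1 : (2:ℝ) - a ≠ 0 := by intro h; linarith
      have h2 : (2:ℝ) - b ≠ 0 := by intro h; linarith
      rw [hg₁def] at hab
      field_simp at hab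
      linarith
  -- put everything together
  have hdisj : Disjoint (fareyPlusMap ⁻¹' A ∩ Set.Ioo (0:ℝ) (1/2))
      (fareyPlusMap ⁻¹' A ∩ Set.Ioo (1/2 : ℝ) 1) := by
    rw [Set.disjoint_left]
    rintro x ⟨-, -, hx2⟩ ⟨-, hx2', -⟩
    linarith
  rw [happly _ hmeasP, happly _ hA, hsplit,
    lintegral_union ((hFmeas hA).inter measurableSet_Ioo) hdisj, h0, h1, hcv0, hcv1,
    Set.inter_eq_left.mpr hA1,
    ← lintegral_add_left (f := fun y : ℝ => ENNReal.ofReal (1/y))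
      (Measurable.ennreal_ofReal (by fun_prop))]
  apply setLIntegral_congr_fun hA
  intro y hy
  beta_reduce
  obtain ⟨hy0, hy1⟩ := hA1 hy
  have h1y : (0:ℝ) < 1 - y := by linarith
  rw [← ENNReal.ofReal_add (by positivity) (by positivity)]
  congr 1
  field_simp
  try ring
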